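/- arXiv:0708.2114 — 2 statements merged into one kernel-verified Lean document; each statement's English description precedes it below -/
import Mathlib

section
/- Let ρ be a rotation of the plane ℝ² about a center c by angle α with 0 < α < 2π, and let p ≠ c. Then every point x satisfying dist x p ≤ dist x (ρ p) and dist x p ≤ dist x (ρ⁻¹ p) lies in the closed angular sector with apex c, angular width α, centered at the ray from c through p (i.e., the set of points whose angle at c measured from the ray cp lies in [-α/2, α/2], together with c itself). -/
open Complex

/-- Let `ρ` be the rotation of the plane (identified with `ℂ`) about the center `c` by angle
`α ∈ (0, 2π)`, and let `p ≠ c`.  Every point `x` with `dist x p ≤ dist x (ρ p)` and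
`dist x p ≤ dist x (ρ⁻¹ p)` lies in the closed angular sector with apex `c`, angular width `α`,
centered at the ray from `c` through `p`: either `x = c`, or the signed angle of `x - c`
measured from the ray `c p` lies in `[-α/2, α/2]`. -/
theorem mem_sector_of_rotation (c p x : ℂ) (α : ℝ)
    (hα : 0 < α) (hα' : α < 2 * Real.pi) (hp : p ≠ c)
    (h₁ : dist x p ≤ dist x (c + Complex.exp (α * Complex.I) * (p - c)))
    (h₂ : dist x p ≤ dist x (c + Complex.exp (-(α : ℂ) * Complex.I) * (p - c))) :
    x = c ∨ |Complex.arg ((x - c) / (p - c))| ≤ α / 2 := by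
  by_cases hx : x = c
  · exact Or.inl hx
  right
  have hd0 : p - c ≠ 0 := sub_ne_zero.mpr hp
  set d : ℂ := p - c with hd
  set w : ℂ := (x - c) / d with hw
  have hw0 : w ≠ 0 := div_ne_zero (sub_ne_zero.mpr hx) hd0
  set θ := Complex.arg w with hθ
  have hθπ : θ ≤ Real.pi := Complex.arg_le_pi w
  have hθπ' : -Real.pi < θ := Complex.neg_pi_lt_arg w
  have habsd : 0 < ‖d‖ := norm_pos_iff.mpr hd0
  -- express the distances
  have hwd : d * w = x - c := by
    rw [hw]; field_simp
  clear_value θ w d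
  have key : ∀ z : ℂ, dist x (c + z * d) = ‖d‖ * ‖w - z‖ := by
    intro z
    rw [Complex.dist_eq, ← norm_mul]
    congr 1
    linear_combination -hwd
  have hxp : dist x p = ‖d‖ * ‖w - 1‖ := by
    rw [Complex.dist_eq, ← norm_mul]
    congr 1
    linear_combination -hwd + hd
  have h1' : ‖w - 1‖ ≤ ‖w - Complex.exp (α * Complex.I)‖ :=
    le_of_mul_le_mul_left (by rw [← hxp, ← key]; exact h₁) habsd
  have h2' : ‖w - 1‖ ≤ ‖w - Complex.exp (-(α : ℂ) * Complex.I)‖ :=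
    le_of_mul_le_mul_left (by rw [← hxp, ← key]; exact h₂) habsd
  -- square the inequalities and expand to real-part conditions
  have sq1 : Complex.normSq (w - 1) ≤ Complex.normSq (w - Complex.exp (α * Complex.I)) := by
    rw [← Complex.sq_norm, ← Complex.sq_norm]
    exact pow_le_pow_left₀ (norm_nonneg _) h1' 2
  have sq2 : Complex.normSq (w - 1) ≤ Complex.normSq (w - Complex.exp (-(α : ℂ) * Complex.I)) := by
    rw [← Complex.sq_norm, ← Complex.sq_norm]
    exact pow_le_pow_left₀ (norm_nonneg _) h2' 2
  have hns1 : Complex.normSq (Complex.exp ((α : ℂ) * Complex.I)) = 1 := by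
    rw [Complex.normSq_eq_norm_sq, Complex.norm_exp_ofReal_mul_I]; norm_num
  have hns2 : Complex.normSq (Complex.exp (-(α : ℂ) * Complex.I)) = 1 := by
    have : (-(α : ℂ)) = ((-α : ℝ) : ℂ) := by push_cast; ring
    rw [this, Complex.normSq_eq_norm_sq, Complex.norm_exp_ofReal_mul_I]; norm_num
  rw [Complex.normSq_sub, Complex.normSq_sub, hns1] at sq1
  simp only [map_one, mul_one] at sq1
  rw [Complex.normSq_sub, Complex.normSq_sub, hns2] at sq2
  simp only [map_one, mul_one] at sq2
  have re1 : (w * (starRingEnd ℂ) (Complex.exp ((α : ℂ) * Complex.I))).re ≤ w.re := by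
    linarith
  have re2 : (w * (starRingEnd ℂ) (Complex.exp (-(α : ℂ) * Complex.I))).re ≤ w.re := by
    linarith
  -- write w in polar form
  set r := ‖w‖ with hr
  have hrpos : 0 < r := norm_pos_iff.mpr hw0
  have hpolar : (r : ℂ) * Complex.exp (θ * Complex.I) = w := by
    rw [hθ, hr]; exact Complex.norm_mul_exp_arg_mul_I w
  have hconj1 : (starRingEnd ℂ) (Complex.exp ((α : ℂ) * Complex.I))
      = Complex.exp (((-α : ℝ) : ℂ) * Complex.I) := by
    rw [← Complex.exp_conj]
    congr 1
    simp [Complex.conj_I]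
  have hconj2 : (starRingEnd ℂ) (Complex.exp (-(α : ℂ) * Complex.I))
      = Complex.exp (((α : ℝ) : ℂ) * Complex.I) := by
    rw [← Complex.exp_conj]
    congr 1
    simp [Complex.conj_I]
  have hre : ∀ β : ℝ, (w * Complex.exp ((β : ℂ) * Complex.I)).re = r * Real.cos (θ + β) := by
    intro β
    rw [← hpolar, mul_assoc, ← Complex.exp_add]
    have : (θ : ℂ) * Complex.I + (β : ℂ) * Complex.I = ((θ + β : ℝ) : ℂ) * Complex.I := by
      push_cast; ring
    rw [this, Complex.re_ofReal_mul, Complex.exp_ofReal_mul_I_re]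
  have hwre : w.re = r * Real.cos θ := by
    have := hre 0
    simpa using this
  rw [hconj1, hre (-α), hwre] at re1
  rw [hconj2, hre α, hwre] at re2
  have hcos1 : Real.cos (θ - α) ≤ Real.cos θ := by
    have h := (mul_le_mul_iff_right₀ hrpos).mp re1
    rwa [show θ + (-α) = θ - α by ring] at h
  have hcos2 : Real.cos (θ + α) ≤ Real.cos θ := (mul_le_mul_iff_right₀ hrpos).mp re2
  -- derive sine sign conditions
  have hsinhalf : 0 < Real.sin (α / 2) :=
    Real.sin_pos_of_pos_of_lt_pi (by linarith) (by linarith)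
  have hs1 : Real.sin (θ - α / 2) ≤ 0 := by
    have h := Real.cos_sub_cos (θ - α) θ
    have e1 : (θ - α + θ) / 2 = θ - α / 2 := by ring
    have e2 : (θ - α - θ) / 2 = -(α / 2) := by ring
    rw [e1, e2, Real.sin_neg] at h
    nlinarith [hcos1]
  have hs2 : 0 ≤ Real.sin (θ + α / 2) := by
    have h := Real.cos_sub_cos (θ + α) θ
    have e1 : (θ + α + θ) / 2 = θ + α / 2 := by ring
    have e2 : (θ + α - θ) / 2 = α / 2 := by ring
    rw [e1, e2] at h
    nlinarith [hcos2]
  -- conclude |θ| ≤ α/2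
  rw [abs_le]
  constructor
  · by_contra hcon
    push_neg at hcon
    have h1 : 0 < -(θ + α / 2) := by linarith
    have h2 : -(θ + α / 2) < Real.pi := by linarith
    have := Real.sin_pos_of_pos_of_lt_pi h1 h2
    rw [Real.sin_neg] at this
    linarith
  · by_contra hcon
    push_neg at hcon
    have h1 : 0 < θ - α / 2 := by linarith
    have h2 : θ - α / 2 < Real.pi := by linarith
    have := Real.sin_pos_of_pos_of_lt_pi h1 h2
    linarith
end

section
/- Let π : ℝ³ → ℝ² be the projection omitting the third coordinate, let G be a group of isometries of ℝ³, and let G_z ≤ G be the subgroup of elements g satisfying π∘g = g₂∘π for some isometry g₂ of ℝ² and preserving every horizontal plane {z = c}. Suppose p ∈ ℝ³ is such that for every g ∈ G, if g p has the same third coordinate as p then g ∈ G_z. Then π(Vor_{Gp}(p)) ⊆ Vor_{G_z' π(p)}(π(p)), where G_z' is the induced planar group {g₂ : g ∈ G_z}. -/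
/-- The vertical projection `ℝ³ → ℝ²` omitting the third coordinate. -/
noncomputable def projXY (x : EuclideanSpace ℝ (Fin 3)) : EuclideanSpace ℝ (Fin 2) :=
  WithLp.toLp 2 (fun i : Fin 2 => x i.castSucc)

lemma dist_sq_split (a b : EuclideanSpace ℝ (Fin 3)) :
    dist a b ^ 2 = dist (projXY a) (projXY b) ^ 2 + (a 2 - b 2) ^ 2 := by
  have h1 : dist a b ^ 2 = ∑ i, (a i - b i) ^ 2 := by
    rw [EuclideanSpace.dist_eq, Real.sq_sqrt (by positivity)]
    simp [Real.dist_eq, sq_abs]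
  have h2 : dist (projXY a) (projXY b) ^ 2 = ∑ i : Fin 2, (a i.castSucc - b i.castSucc) ^ 2 := by
    rw [EuclideanSpace.dist_eq, Real.sq_sqrt (by positivity)]
    simp [projXY, Real.dist_eq, sq_abs]
  rw [h1, h2, Fin.sum_univ_three, Fin.sum_univ_two, Fin.castSucc_zero, Fin.castSucc_one]
  try ring

/-- Let `G` be a group of isometries of `ℝ³` and let `G_z ≤ G` be the subgroup of horizontal
elements, i.e. those `g ∈ G` which commute with the projection `π = projXY` via a planar isometry
`g₂` and preserve every horizontal plane.  If every `g ∈ G` with `g p` at the same height as `p`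
belongs to `G_z`, then `π (Vor_{Gp}(p)) ⊆ Vor_{G_z' π(p)}(π(p))`, where the orbit of `π p` under
the induced planar group `G_z'` is `{π (g p) : g ∈ G_z}`. -/
theorem projection_vor_subset
    (G Gz : Subgroup (EuclideanSpace ℝ (Fin 3) ≃ᵢ EuclideanSpace ℝ (Fin 3)))
    (hGz : ∀ g, g ∈ Gz ↔ g ∈ G ∧
      ∃ g₂ : EuclideanSpace ℝ (Fin 2) ≃ᵢ EuclideanSpace ℝ (Fin 2),
        (∀ x, projXY (g x) = g₂ (projXY x)) ∧ (∀ x, g x 2 = x 2))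
    (p : EuclideanSpace ℝ (Fin 3))
    (hp : ∀ g ∈ G, (g p) 2 = p 2 → g ∈ Gz) :
    projXY '' {x | ∀ g ∈ G, dist x p ≤ dist x (g p)} ⊆
      {y | ∀ g ∈ Gz, dist y (projXY p) ≤ dist y (projXY (g p))} := by
  rintro y ⟨x, hx, rfl⟩ g hg
  obtain ⟨hgG, g₂, hcomm, hz⟩ := (hGz g).mp hg
  have hle : dist x p ≤ dist x (g p) := hx g hgG
  have h1 := dist_sq_split x p
  have h2 := dist_sq_split x (g p)
  rw [hz p] at h2
  have hsq : dist (projXY x) (projXY p) ^ 2 ≤ dist (projXY x) (projXY (g p)) ^ 2 := by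
    nlinarith [dist_nonneg (x := x) (y := p), dist_nonneg (x := x) (y := g p)]
  calc dist (projXY x) (projXY p) = Real.sqrt (dist (projXY x) (projXY p) ^ 2) :=
        (Real.sqrt_sq dist_nonneg).symm
    _ ≤ Real.sqrt (dist (projXY x) (projXY (g p)) ^ 2) := Real.sqrt_le_sqrt hsq
    _ = _ := Real.sqrt_sq dist_nonneg
end
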